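/- arXiv:2506.05583 — 4 statements merged into one kernel-verified Lean document; each statement's English description precedes it below -/
import Mathlib

section
/- Let S_1,...,S_n,S_{n+1} be exchangeable real-valued random variables. Let q̂ be the ⌈(n+1)(1-α)⌉-th smallest value among S_1,...,S_n (for α ∈ (0,1) with ⌈(n+1)(1-α)⌉ ≤ n). Then P(S_{n+1} ≤ q̂) ≥ 1 - α. -/
open MeasureTheory Finset
open scoped ENNReal


lemma rank_card_lemma {N k : ℕ} (v : Fin N → ℝ) (hk : k ≤ N) :
    k ≤ (univ.filter fun j : Fin N => (univ.filter fun i => v i < v j).card < k).card := by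
  classical
  set σ := Tuple.sort v with hσ
  have hmono := Tuple.monotone_sort v
  have key : ∀ m : Fin N, (m : ℕ) < k →
      (univ.filter fun i => v i < v (σ m)).card < k := by
    intro m hm
    have hsub : (univ.filter fun i => v i < v (σ m)) ⊆
        (univ.filter fun m' : Fin N => m' < m).image σ := by
      intro i hi
      simp only [mem_filter, mem_univ, true_and] at hi
      refine mem_image.2 ⟨σ.symm i, ?_, by simp⟩
      simp only [mem_filter, mem_univ, true_and]
      by_contra hge
      push_neg at hge
      have := hmono hge
      simp only [Function.comp] at this
      rw [← hσ, Equiv.apply_symm_apply] at this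
      exact absurd hi (not_lt.2 this)
    calc (univ.filter fun i => v i < v (σ m)).card
        ≤ ((univ.filter fun m' : Fin N => m' < m).image σ).card := card_le_card hsub
      _ ≤ (univ.filter fun m' : Fin N => m' < m).card := card_image_le
      _ = (m : ℕ) := by
          have : (univ.filter fun m' : Fin N => m' < m) = Finset.Iio m := by
            ext x; simp
          rw [this]; simp [Fin.card_Iio]
      _ < k := hm
  -- inject Fin k via m ↦ σ ⟨m, _⟩
  have hinj : ∀ a ∈ (univ : Finset (Fin k)), σ ⟨a, lt_of_lt_of_le a.2 hk⟩ ∈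
      (univ.filter fun j : Fin N => (univ.filter fun i => v i < v j).card < k) := by
    intro a _
    simp only [mem_filter, mem_univ, true_and]
    exact key _ a.2
  have := Finset.card_le_card_of_injOn (fun a : Fin k => σ ⟨a, lt_of_lt_of_le a.2 hk⟩)
    hinj (by
      intro a _ b _ hab
      have := σ.injective hab
      exact Fin.ext (by simpa [Fin.ext_iff] using this))
  simpa using this

lemma rank_measurable {k : ℕ} {N : ℕ} (j : Fin N) :
    MeasurableSet {v : Fin N → ℝ | (univ.filter fun i => v i < v j).card < k} := by
  have hmeas : Measurable fun v : Fin N → ℝ =>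
      (univ.filter fun i => v i < v j).card := by
    simp_rw [Finset.card_filter]
    apply Finset.measurable_sum
    intro i _
    exact Measurable.ite (measurableSet_lt (measurable_pi_apply i) (measurable_pi_apply j))
      measurable_const measurable_const
  exact hmeas (measurableSet_lt measurable_id measurable_const : MeasurableSet {m : ℕ | m < k})

lemma card_filter_comp_equiv {α : Type*} [Fintype α] [DecidableEq α] (σ : Equiv.Perm α)
    (p : α → Prop) [DecidablePred p] :
    (univ.filter fun i => p (σ i)).card = (univ.filter p).card := by
  apply Finset.card_bij (fun a _ => σ a)
  · intro a ha; simp only [mem_filter, mem_univ, true_and] at ha ⊢; exact ha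
  · intro a _ b _ h; exact σ.injective h
  · intro b hb; simp only [mem_filter, mem_univ, true_and] at hb
    exact ⟨σ.symm b, by simpa using hb, by simp⟩


/-- Split conformal coverage lower bound under exchangeability. -/
theorem conformal_coverage_lower
    {Ω : Type*} [MeasurableSpace Ω] (μ : Measure Ω) [IsProbabilityMeasure μ]
    (n : ℕ) (S : Fin (n + 1) → Ω → ℝ) (hS : ∀ i, Measurable (S i))
    (hexch : ∀ σ : Equiv.Perm (Fin (n + 1)),
      Measure.map (fun ω => fun i => S (σ i) ω) μ = Measure.map (fun ω => fun i => S i ω) μ)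
    (α : ℝ) (hα : α ∈ Set.Ioo (0 : ℝ) 1)
    (hk : ⌈((n : ℝ) + 1) * (1 - α)⌉₊ ≤ n) :
    ENNReal.ofReal (1 - α) ≤
      μ {ω | S (Fin.last n) ω ≤
        sInf {x : ℝ | ⌈((n : ℝ) + 1) * (1 - α)⌉₊ ≤
          (Finset.univ.filter fun i : Fin n => S i.castSucc ω ≤ x).card}} := by
  classical
  set k := ⌈((n : ℝ) + 1) * (1 - α)⌉₊ with hkdef
  set f : Ω → (Fin (n + 1) → ℝ) := fun ω i => S i ω with hf
  have hfm : Measurable f := measurable_pi_lambda _ hS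
  set C : Fin (n + 1) → Set (Fin (n + 1) → ℝ) :=
    fun j => {v | (univ.filter fun i => v i < v j).card < k} with hC
  have hCm : ∀ j, MeasurableSet (C j) := fun j => rank_measurable j
  set B : Fin (n + 1) → Set Ω := fun j => f ⁻¹' (C j) with hB
  have hBm : ∀ j, MeasurableSet (B j) := fun j => hfm (hCm j)
  -- Step 1: B (last) ⊆ target event
  have hsub : B (Fin.last n) ⊆ {ω | S (Fin.last n) ω ≤
      sInf {x : ℝ | k ≤ (univ.filter fun i : Fin n => S i.castSucc ω ≤ x).card}} := by
    intro ω hω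
    simp only [hB, hC, Set.mem_preimage, Set.mem_setOf_eq, hf] at hω
    -- card over Fin n of strict < k
    have hcard : (univ.filter fun i : Fin n => S i.castSucc ω < S (Fin.last n) ω).card < k := by
      refine lt_of_le_of_lt ?_ hω
      apply Finset.card_le_card_of_injOn (fun i => i.castSucc)
      · intro i hi
        simp only [mem_filter, mem_univ, true_and] at hi ⊢
        simpa using hi
      · intro a _ b _ h; exact Fin.castSucc_injective n h
    simp only [Set.mem_setOf_eq]
    apply le_csInf
    · -- nonempty: big x
      obtain ⟨M, hM⟩ := Finset.exists_le ((univ : Finset (Fin n)).image fun i => S i.castSucc ω)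
      refine ⟨M, ?_⟩
      simp only [Set.mem_setOf_eq]
      have : (univ.filter fun i : Fin n => S i.castSucc ω ≤ M) = univ := by
        ext i
        simp only [mem_filter, mem_univ, true_and, iff_true]
        exact hM _ (mem_image_of_mem _ (mem_univ i))
      rw [this]
      simpa using hk
    · intro b hb
      simp only [Set.mem_setOf_eq] at hb
      by_contra hlt
      push_neg at hlt
      have hsub2 : (univ.filter fun i : Fin n => S i.castSucc ω ≤ b) ⊆
          (univ.filter fun i : Fin n => S i.castSucc ω < S (Fin.last n) ω) := by
        intro i hi
        simp only [mem_filter, mem_univ, true_and] at hi ⊢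
        exact lt_of_le_of_lt hi hlt
      exact absurd (le_trans hb (card_le_card hsub2)) (not_le.2 hcard)
  -- Step 2: equal measures
  have heq : ∀ j, μ (B j) = μ (B (Fin.last n)) := by
    intro j
    set σ := Equiv.swap j (Fin.last n) with hσ
    have hgm : Measurable fun ω => fun i => S (σ i) ω :=
      measurable_pi_lambda _ fun i => hS (σ i)
    have hpre : B j = (fun ω => fun i => S (σ i) ω) ⁻¹' (C (Fin.last n)) := by
      ext ω
      simp only [hB, hC, Set.mem_preimage, Set.mem_setOf_eq, hf]
      have hσlast : σ (Fin.last n) = j := Equiv.swap_apply_right _ _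
      have hcards : (univ.filter fun i => S (σ i) ω < S (σ (Fin.last n)) ω).card
          = (univ.filter fun i => S i ω < S j ω).card := by
        simp only [hσlast]
        exact card_filter_comp_equiv σ (fun i => S i ω < S j ω)
      omega
    rw [hpre, ← Measure.map_apply hgm (hCm _), hexch σ, Measure.map_apply hfm (hCm _)]
  -- Step 3: pointwise counting → sum of measures
  have hpoint : ∀ ω, (k : ℝ≥0∞) ≤ ∑ j, (B j).indicator (fun _ => (1 : ℝ≥0∞)) ω := by
    intro ω
    have hcount : k ≤ (univ.filter fun j => ω ∈ B j).card := by
      have h2 := rank_card_lemma (f ω) (le_trans hk (Nat.le_succ n))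
      refine le_trans h2 (le_of_eq (congrArg Finset.card ?_))
      apply Finset.filter_congr
      intro j _
      simp only [hB, hC, Set.mem_preimage, Set.mem_setOf_eq]
    calc (k : ℝ≥0∞) ≤ ((univ.filter fun j => ω ∈ B j).card : ℝ≥0∞) := by
          exact_mod_cast hcount
      _ = ∑ j, (B j).indicator (fun _ => (1 : ℝ≥0∞)) ω := by
          rw [Finset.card_filter]
          push_cast
          apply Finset.sum_congr rfl
          intro j _
          by_cases hj : ω ∈ B j <;> simp [Set.indicator, hj]
  have hsum : (k : ℝ≥0∞) ≤ ∑ j, μ (B j) := by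
    have h1 : ∀ j : Fin (n + 1), μ (B j) = ∫⁻ ω, (B j).indicator (fun _ => (1 : ℝ≥0∞)) ω ∂μ := by
      intro j
      rw [lintegral_indicator (hBm j)]
      simp
    calc (k : ℝ≥0∞) = ∫⁻ _, (k : ℝ≥0∞) ∂μ := by simp
      _ ≤ ∫⁻ ω, ∑ j, (B j).indicator (fun _ => (1 : ℝ≥0∞)) ω ∂μ :=
          lintegral_mono hpoint
      _ = ∑ j, ∫⁻ ω, (B j).indicator (fun _ => (1 : ℝ≥0∞)) ω ∂μ := by
          rw [lintegral_finset_sum]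
          intro j _
          exact (measurable_const.indicator (hBm j))
      _ = ∑ j, μ (B j) := by simp_rw [← h1]
  -- Step 4: conclude
  have hlastbd : (k : ℝ≥0∞) ≤ (n + 1 : ℝ≥0∞) * μ (B (Fin.last n)) := by
    calc (k : ℝ≥0∞) ≤ ∑ j, μ (B j) := hsum
      _ = ∑ _j : Fin (n + 1), μ (B (Fin.last n)) := Finset.sum_congr rfl fun j _ => heq j
      _ = (n + 1 : ℝ≥0∞) * μ (B (Fin.last n)) := by
          rw [Finset.sum_const, Finset.card_univ, Fintype.card_fin]
          simp [nsmul_eq_mul]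
  have hdiv : (k : ℝ≥0∞) / (n + 1 : ℝ≥0∞) ≤ μ (B (Fin.last n)) := by
    have hne : ((n : ℝ≥0∞) + 1) ≠ 0 := (lt_of_lt_of_le zero_lt_one le_add_self).ne'
    rw [ENNReal.div_le_iff_le_mul (Or.inl hne) (Or.inl (by simp)), mul_comm]
    exact hlastbd
  have hfinal : ENNReal.ofReal (1 - α) ≤ (k : ℝ≥0∞) / (n + 1 : ℝ≥0∞) := by
    have h1 : (1 - α : ℝ) ≤ (k : ℝ) / ((n : ℝ) + 1) := by
      rw [le_div_iff₀ (by positivity)]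
      calc (1 - α) * ((n : ℝ) + 1) = ((n : ℝ) + 1) * (1 - α) := by ring
        _ ≤ (k : ℝ) := Nat.le_ceil _
    calc ENNReal.ofReal (1 - α) ≤ ENNReal.ofReal ((k : ℝ) / ((n : ℝ) + 1)) :=
          ENNReal.ofReal_le_ofReal h1
      _ = (k : ℝ≥0∞) / (n + 1 : ℝ≥0∞) := by
          rw [ENNReal.ofReal_div_of_pos (by positivity)]
          congr 1
          · exact ENNReal.ofReal_natCast k
          · rw [ENNReal.ofReal_add (by positivity) zero_le_one]
            simp [ENNReal.ofReal_natCast]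
  calc ENNReal.ofReal (1 - α) ≤ (k : ℝ≥0∞) / (n + 1 : ℝ≥0∞) := hfinal
    _ ≤ μ (B (Fin.last n)) := hdiv
    _ ≤ _ := measure_mono hsub
end

section
/- Let S_1,...,S_n,S_{n+1} be exchangeable real-valued random variables that are almost surely distinct. Let q̂ be the ⌈(n+1)(1-α)⌉-th smallest value among S_1,...,S_n, with ⌈(n+1)(1-α)⌉ ≤ n. Then P(S_{n+1} ≤ q̂) ≤ 1 - α + 1/(n+1). -/
open MeasureTheory Finset
open scoped ENNReal

/-- Rank of index `j` among the values of `v`. -/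
noncomputable def crk (n : ℕ) (v : Fin (n + 1) → ℝ) (j : Fin (n + 1)) : ℕ :=
  (Finset.univ.filter fun i => v i ≤ v j).card

lemma crk_pos (n : ℕ) (v : Fin (n + 1) → ℝ) (j : Fin (n + 1)) : 1 ≤ crk n v j := by
  rw [crk, Nat.one_le_iff_ne_zero, ← Nat.pos_iff_ne_zero, Finset.card_pos]
  exact ⟨j, by simp⟩

lemma crk_le (n : ℕ) (v : Fin (n + 1) → ℝ) (j : Fin (n + 1)) : crk n v j ≤ n + 1 := by
  rw [crk]
  exact (Finset.card_filter_le _ _).trans (by simp)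

lemma crk_inj (n : ℕ) (v : Fin (n + 1) → ℝ) (hv : Function.Injective v) :
    Function.Injective (crk n v) := by
  have key : ∀ a b : Fin (n + 1), v a ≤ v b → crk n v a = crk n v b → a = b := by
    intro a b hab h
    have hsub : (Finset.univ.filter fun i => v i ≤ v a) ⊆
        (Finset.univ.filter fun i => v i ≤ v b) := by
      intro i hi
      simp only [Finset.mem_filter, Finset.mem_univ, true_and] at hi ⊢
      exact hi.trans hab
    have heq := Finset.eq_of_subset_of_card_le hsub (by rw [← crk, ← crk, h])
    have hb : b ∈ (Finset.univ.filter fun i => v i ≤ v a) := by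
      rw [heq]; simp
    simp only [Finset.mem_filter, Finset.mem_univ, true_and] at hb
    exact (hv (le_antisymm hab hb).symm).symm
  intro a b h
  rcases le_total (v a) (v b) with hab | hab
  · exact key a b hab h
  · exact (key b a hab h.symm).symm

lemma crk_card (n : ℕ) (v : Fin (n + 1) → ℝ) (hv : Function.Injective v)
    (k : ℕ) (hk : k ≤ n + 1) :
    (Finset.univ.filter fun j => crk n v j ≤ k).card = k := by
  have hinj := crk_inj n v hv
  have himg : Finset.univ.image (crk n v) = Finset.Icc 1 (n + 1) := by
    apply Finset.eq_of_subset_of_card_le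
    · intro m hm
      simp only [Finset.mem_image] at hm
      obtain ⟨j, _, rfl⟩ := hm
      simp [Finset.mem_Icc, crk_pos, crk_le]
    · rw [Finset.card_image_of_injective _ hinj]
      simp
  have h2 : (Finset.univ.filter fun j => crk n v j ≤ k).image (crk n v)
      = Finset.Icc 1 k := by
    ext m
    simp only [Finset.mem_image, Finset.mem_filter, Finset.mem_univ, true_and,
      Finset.mem_Icc]
    constructor
    · rintro ⟨j, hj, rfl⟩
      exact ⟨crk_pos n v j, hj⟩
    · intro hm
      have hmem : m ∈ Finset.Icc 1 (n + 1) := Finset.mem_Icc.2 ⟨hm.1, hm.2.trans hk⟩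
      rw [← himg] at hmem
      obtain ⟨j, -, rfl⟩ := Finset.mem_image.1 hmem
      exact ⟨j, hm.2, rfl⟩
  have := congrArg Finset.card h2
  rwa [Finset.card_image_of_injective _ hinj, Nat.card_Icc] at this

lemma crk_perm (n : ℕ) (v : Fin (n + 1) → ℝ) (σ : Equiv.Perm (Fin (n + 1)))
    (j : Fin (n + 1)) : crk n (fun i => v (σ i)) j = crk n v (σ j) := by
  unfold crk
  apply Finset.card_bij (fun i _ => σ i)
  · intro a ha; simpa using (by simpa using ha : v (σ a) ≤ v (σ j))
  · intro a _ b _ h; exact σ.injective h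
  · intro b hb
    refine ⟨σ.symm b, ?_, by simp⟩
    simp only [Finset.mem_filter, Finset.mem_univ, true_and] at hb ⊢
    simpa using hb

lemma crk_last_iff (n : ℕ) (v : Fin (n + 1) → ℝ) (hv : Function.Injective v) (k : ℕ)
    (hk1 : 1 ≤ k) (hk : k ≤ n) :
    (v (Fin.last n) ≤
        sInf {x : ℝ | k ≤ (Finset.univ.filter fun i : Fin n => v i.castSucc ≤ x).card})
      ↔ crk n v (Fin.last n) ≤ k := by
  have hn : 0 < n := lt_of_lt_of_le hk1 hk
  set A : Set ℝ :=
    {x : ℝ | k ≤ (Finset.univ.filter fun i : Fin n => v i.castSucc ≤ x).card} with hA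
  have h_crk : crk n v (Fin.last n)
      = (Finset.univ.filter fun i : Fin n => v i.castSucc ≤ v (Fin.last n)).card + 1 := by
    rw [crk, Finset.card_filter, Fin.sum_univ_castSucc, Finset.card_filter]
    simp
  have hMne : (Finset.univ.image fun i : Fin n => v i.castSucc).Nonempty := by
    refine ⟨v (⟨0, hn⟩ : Fin n).castSucc, Finset.mem_image_of_mem _ (Finset.mem_univ _)⟩
  set M := Finset.univ.image fun i : Fin n => v i.castSucc with hM
  have hAne : A.Nonempty := by
    refine ⟨M.max' hMne, ?_⟩
    have : (Finset.univ.filter fun i : Fin n => v i.castSucc ≤ M.max' hMne)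
        = Finset.univ := by
      refine Finset.eq_univ_iff_forall.2 fun i => ?_
      simp only [Finset.mem_filter, Finset.mem_univ, true_and]
      exact Finset.le_max' M _ (Finset.mem_image_of_mem _ (Finset.mem_univ i))
    simp only [hA, Set.mem_setOf_eq, this, Finset.card_univ, Fintype.card_fin]
    exact hk
  have hBdd : BddBelow A := by
    refine ⟨M.min' hMne, fun x hx => ?_⟩
    simp only [hA, Set.mem_setOf_eq] at hx
    have hpos : 0 < (Finset.univ.filter fun i : Fin n => v i.castSucc ≤ x).card :=
      lt_of_lt_of_le hk1 hx
    obtain ⟨i, hi⟩ := Finset.card_pos.1 hpos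
    simp only [Finset.mem_filter, Finset.mem_univ, true_and] at hi
    exact le_trans (Finset.min'_le _ _ (Finset.mem_image_of_mem _ (Finset.mem_univ i))) hi
  constructor
  · intro h
    by_contra hc
    rw [h_crk] at hc
    push_neg at hc
    have hkc : k ≤ (Finset.univ.filter fun i : Fin n => v i.castSucc ≤ v (Fin.last n)).card := by
      omega
    set T := Finset.univ.filter fun i : Fin n => v i.castSucc ≤ v (Fin.last n) with hT
    have hTne : T.Nonempty := Finset.card_pos.1 (lt_of_lt_of_le hk1 hkc)
    have hTIne : (T.image fun i : Fin n => v i.castSucc).Nonempty := hTne.image _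
    set x := (T.image fun i : Fin n => v i.castSucc).max' hTIne with hx
    obtain ⟨j, hjT, hjx⟩ := Finset.mem_image.1 ((T.image fun i : Fin n => v i.castSucc).max'_mem hTIne)
    have hjle : v j.castSucc ≤ v (Fin.last n) := by
      simp only [hT, Finset.mem_filter] at hjT; exact hjT.2
    have hjne : v j.castSucc ≠ v (Fin.last n) := fun h' =>
      absurd (hv h') (Fin.ne_of_lt (Fin.castSucc_lt_last j))
    have hxlt : x < v (Fin.last n) := by
      rw [hx, ← hjx]; exact lt_of_le_of_ne hjle hjne
    have hxA : x ∈ A := by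
      simp only [hA, Set.mem_setOf_eq]
      refine le_trans hkc (Finset.card_le_card ?_)
      intro i hi
      simp only [Finset.mem_filter, Finset.mem_univ, true_and]
      exact Finset.le_max' (T.image fun i : Fin n => v i.castSucc) _
        (Finset.mem_image_of_mem _ hi)
    exact absurd (le_trans h (csInf_le hBdd hxA)) (not_le.2 hxlt)
  · intro h
    rw [h_crk] at h
    refine le_csInf hAne fun x hx => ?_
    by_contra hlt
    push_neg at hlt
    simp only [hA, Set.mem_setOf_eq] at hx
    have hsub : (Finset.univ.filter fun i : Fin n => v i.castSucc ≤ x)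
        ⊆ Finset.univ.filter fun i : Fin n => v i.castSucc ≤ v (Fin.last n) := by
      intro i hi
      simp only [Finset.mem_filter, Finset.mem_univ, true_and] at hi ⊢
      exact hi.trans hlt.le
    have := le_trans hx (Finset.card_le_card hsub)
    omega
/-- Split conformal coverage upper bound under exchangeability and a.s. distinct scores. -/
theorem conformal_coverage_upper
    {Ω : Type*} [MeasurableSpace Ω] (μ : Measure Ω) [IsProbabilityMeasure μ]
    (n : ℕ) (S : Fin (n + 1) → Ω → ℝ) (hS : ∀ i, Measurable (S i))
    (hexch : ∀ σ : Equiv.Perm (Fin (n + 1)),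
      Measure.map (fun ω => fun i => S (σ i) ω) μ = Measure.map (fun ω => fun i => S i ω) μ)
    (hdist : ∀ᵐ ω ∂μ, Function.Injective fun i => S i ω)
    (α : ℝ) (hα : α ∈ Set.Ioo (0 : ℝ) 1)
    (hk : ⌈((n : ℝ) + 1) * (1 - α)⌉₊ ≤ n) :
    μ {ω | S (Fin.last n) ω ≤
        sInf {x : ℝ | ⌈((n : ℝ) + 1) * (1 - α)⌉₊ ≤
          (Finset.univ.filter fun i : Fin n => S i.castSucc ω ≤ x).card}} ≤
      ENNReal.ofReal (1 - α + 1 / ((n : ℝ) + 1)) := by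
  obtain ⟨hα0, hα1⟩ := hα
  set k := ⌈((n : ℝ) + 1) * (1 - α)⌉₊ with hkdef
  have hk1 : 1 ≤ k :=
    Nat.ceil_pos.2 (mul_pos (by positivity) (by linarith))
  -- measurability setup
  have hG : Measurable (fun ω => fun i => S i ω) := measurable_pi_lambda _ hS
  have hGσ : ∀ σ : Equiv.Perm (Fin (n + 1)),
      Measurable (fun ω => fun i => S (σ i) ω) :=
    fun σ => measurable_pi_lambda _ fun i => hS (σ i)
  have hrkmeas : ∀ j : Fin (n + 1), Measurable fun v : Fin (n + 1) → ℝ => crk n v j := by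
    intro j
    have hrw : (fun v : Fin (n + 1) → ℝ => crk n v j)
        = fun v => ∑ i : Fin (n + 1), if v i ≤ v j then 1 else 0 := by
      funext v; rw [crk, Finset.card_filter]
    rw [hrw]
    exact Finset.measurable_sum _ fun i _ =>
      Measurable.ite (measurableSet_le (measurable_pi_apply i) (measurable_pi_apply j))
        measurable_const measurable_const
  set B : Fin (n + 1) → Set (Fin (n + 1) → ℝ) := fun j => {v | crk n v j ≤ k} with hB
  have hBmeas : ∀ j, MeasurableSet (B j) := fun j => hrkmeas j measurableSet_Iic
  -- the target event coincides a.e. with a rank event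
  have hev : μ {ω | S (Fin.last n) ω ≤
        sInf {x : ℝ | k ≤ (Finset.univ.filter fun i : Fin n => S i.castSucc ω ≤ x).card}}
      = μ ((fun ω => fun i => S i ω) ⁻¹' B (Fin.last n)) := by
    apply measure_congr
    rw [Filter.eventuallyEq_set]
    filter_upwards [hdist] with ω hω
    exact crk_last_iff n (fun i => S i ω) hω k hk1 hk
  -- exchangeability: all rank events have the same probability
  have key : ∀ j : Fin (n + 1),
      μ ((fun ω => fun i => S i ω) ⁻¹' B j)
        = μ ((fun ω => fun i => S i ω) ⁻¹' B (Fin.last n)) := by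
    intro j
    set σ := Equiv.swap j (Fin.last n) with hσ
    have hpre : (fun ω => fun i => S (σ i) ω) ⁻¹' B (Fin.last n)
        = (fun ω => fun i => S i ω) ⁻¹' B j := by
      ext ω
      simp only [Set.mem_preimage, hB, Set.mem_setOf_eq]
      rw [crk_perm n (fun i => S i ω) σ (Fin.last n)]
      rw [hσ, Equiv.swap_apply_right]
    calc μ ((fun ω => fun i => S i ω) ⁻¹' B j)
        = μ ((fun ω => fun i => S (σ i) ω) ⁻¹' B (Fin.last n)) := by rw [hpre]
      _ = (Measure.map (fun ω => fun i => S (σ i) ω) μ) (B (Fin.last n)) := by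
          rw [Measure.map_apply (hGσ σ) (hBmeas _)]
      _ = (Measure.map (fun ω => fun i => S i ω) μ) (B (Fin.last n)) := by rw [hexch σ]
      _ = μ ((fun ω => fun i => S i ω) ⁻¹' B (Fin.last n)) := by
          rw [Measure.map_apply hG (hBmeas _)]
  -- sum over ranks is exactly k
  have hsum : ∑ j : Fin (n + 1), μ ((fun ω => fun i => S i ω) ⁻¹' B j) = (k : ℝ≥0∞) := by
    have h1 : ∀ j : Fin (n + 1), μ ((fun ω => fun i => S i ω) ⁻¹' B j)
        = ∫⁻ ω, Set.indicator ((fun ω => fun i => S i ω) ⁻¹' B j) (1 : Ω → ℝ≥0∞) ω ∂μ :=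
      fun j => (lintegral_indicator_one (hG (hBmeas j))).symm
    simp only [h1]
    rw [← lintegral_finset_sum _ fun j _ =>
      (measurable_one.indicator (hG (hBmeas j)))]
    have h2 : ∫⁻ ω, ∑ j : Fin (n + 1),
        Set.indicator ((fun ω => fun i => S i ω) ⁻¹' B j) (1 : Ω → ℝ≥0∞) ω ∂μ
        = ∫⁻ _, (k : ℝ≥0∞) ∂μ := by
      apply lintegral_congr_ae
      filter_upwards [hdist] with ω hω
      have hind : ∀ j : Fin (n + 1),
          Set.indicator ((fun ω => fun i => S i ω) ⁻¹' B j) (1 : Ω → ℝ≥0∞) ω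
            = if crk n (fun i => S i ω) j ≤ k then (1 : ℝ≥0∞) else 0 := by
        intro j
        by_cases h : crk n (fun i => S i ω) j ≤ k
        · rw [if_pos h]
          exact Set.indicator_of_mem
            (show ω ∈ (fun ω => fun i => S i ω) ⁻¹' B j from h) 1
        · rw [if_neg h]
          exact Set.indicator_of_notMem
            (show ω ∉ (fun ω => fun i => S i ω) ⁻¹' B j from h) 1
      simp only [hind]
      rw [Finset.sum_boole]
      rw [crk_card n (fun i => S i ω) hω k (by omega)]
    rw [h2, lintegral_const, measure_univ, mul_one]
  -- conclude
  rw [hev]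
  have hmul : ((n : ℝ≥0∞) + 1) * μ ((fun ω => fun i => S i ω) ⁻¹' B (Fin.last n))
      = (k : ℝ≥0∞) := by
    rw [← hsum]
    simp only [key]
    rw [Finset.sum_const, Finset.card_univ, Fintype.card_fin, nsmul_eq_mul]
    push_cast
    ring
  have hne0 : ((n : ℝ≥0∞) + 1) ≠ 0 := by simp
  have hnetop : ((n : ℝ≥0∞) + 1) ≠ ⊤ := by
    simp [ENNReal.add_ne_top, ENNReal.natCast_ne_top]
  rw [← ENNReal.mul_le_mul_iff_right hne0 hnetop, hmul]
  have hco : ((n : ℝ≥0∞) + 1) = ENNReal.ofReal ((n : ℝ) + 1) := by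
    rw [ENNReal.ofReal_add (by positivity) zero_le_one, ENNReal.ofReal_natCast,
      ENNReal.ofReal_one]
  have hck : (k : ℝ≥0∞) = ENNReal.ofReal (k : ℝ) := (ENNReal.ofReal_natCast k).symm
  rw [hco, hck, ← ENNReal.ofReal_mul (by positivity)]
  apply ENNReal.ofReal_le_ofReal
  have hnn : (0 : ℝ) < (n : ℝ) + 1 := by positivity
  have hceil : (k : ℝ) < ((n : ℝ) + 1) * (1 - α) + 1 := by
    rw [hkdef]
    exact Nat.ceil_lt_add_one (le_of_lt (mul_pos hnn (by linarith)))
  have hrhs : ((n : ℝ) + 1) * (1 - α + 1 / ((n : ℝ) + 1))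
      = ((n : ℝ) + 1) * (1 - α) + 1 := by
    field_simp
  rw [hrhs]
  linarith
end

section
/- Let (S_1,...,S_{n+1}) have a joint density proportional to a function invariant under permutations, and let w_i(x_{1:n+1}) be nonnegative weights summing to 1 that depend only on the unordered multiset of covariates. Conditional on the multiset of score values {s_1,...,s_{n+1}}, if P(S_{n+1} = s_i | multiset) = w_i for each i, then for the weighted quantile q̂ = inf{q : Σ_{i: s_i ≤ q} w_i ≥ 1-α} one has P(S_{n+1} ≤ q̂ | multiset) ≥ 1 - α. -/
open MeasureTheory ProbabilityTheory

/-- Weighted exchangeability coverage lemma: conditional on the multiset of the n+1 scores,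
if the test score equals the value s i with probability w i, then the weighted empirical
(1-α)-quantile covers the test score with probability at least 1-α. -/
theorem weighted_exchangeability_coverage
    {Ω : Type*} [MeasurableSpace Ω] (μ : Measure Ω) [IsProbabilityMeasure μ]
    (n : ℕ) (V : Ω → Fin (n + 1) → ℝ)
    (hexch : ∀ σ : Equiv.Perm (Fin (n + 1)),
      Measure.map (fun ω => V ω ∘ σ) μ = Measure.map V μ)
    (s : Fin (n + 1) → ℝ)
    (w : Fin (n + 1) → ℝ) (hw0 : ∀ i, 0 ≤ w i) (hw1 : ∑ i, w i = 1)
    (E : Set Ω) (hE : E = {ω | Multiset.map (V ω) Finset.univ.val =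
      Multiset.map s Finset.univ.val})
    (hcond : ∀ i, μ[|E] {ω | V ω (Fin.last n) = s i} = ENNReal.ofReal (w i))
    (α : ℝ) (hα : α ∈ Set.Ioo (0 : ℝ) 1)
    (qhat : ℝ)
    (hqhat : qhat = sInf {q : ℝ |
      1 - α ≤ ∑ i ∈ Finset.univ.filter fun i : Fin (n + 1) => s i ≤ q, w i}) :
    ENNReal.ofReal (1 - α) ≤ μ[|E] {ω | V ω (Fin.last n) ≤ qhat} := by
  classical
  obtain ⟨hα0, hα1⟩ := hα
  -- μ E ≠ 0
  have hμE0 : μ E ≠ 0 := by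
    intro h0
    have hz : μ[|E] = 0 := ProbabilityTheory.cond_eq_zero_of_meas_eq_zero h0
    have : ∀ i, w i = 0 := by
      intro i
      have := hcond i
      rw [hz] at this
      simp only [Measure.coe_zero, Pi.zero_apply] at this
      have := (ENNReal.ofReal_eq_zero).mp this.symm
      linarith [hw0 i]
    have : (1 : ℝ) = 0 := by rw [← hw1]; simp [this]
    norm_num at this
  have hcE : μ[|E] E = 1 := ProbabilityTheory.cond_apply_self hμE0 (measure_ne_top μ E)
  -- notation for the CDF-like sum
  set F : ℝ → ℝ := fun q => ∑ i ∈ Finset.univ.filter fun i : Fin (n + 1) => s i ≤ q, w i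
    with hF
  set S : Set ℝ := {q : ℝ | 1 - α ≤ F q} with hS
  -- S is nonempty
  have hne : S.Nonempty := by
    refine ⟨Finset.univ.sup' ⟨0, Finset.mem_univ 0⟩ s, ?_⟩
    have hfil : (Finset.univ.filter fun i : Fin (n + 1) =>
        s i ≤ Finset.univ.sup' ⟨0, Finset.mem_univ 0⟩ s) = Finset.univ := by
      apply Finset.filter_true_of_mem
      intro i _
      exact Finset.le_sup' s (Finset.mem_univ i)
    simp only [hS, Set.mem_setOf_eq, hF, hfil, hw1]
    linarith
  -- S is bounded below
  have hbdd : BddBelow S := by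
    refine ⟨Finset.univ.inf' ⟨0, Finset.mem_univ 0⟩ s, ?_⟩
    intro q hq
    by_contra hlt
    push_neg at hlt
    have hfil : (Finset.univ.filter fun i : Fin (n + 1) => s i ≤ q) = ∅ := by
      apply Finset.filter_eq_empty_iff.mpr
      intro i _
      push_neg
      calc q < Finset.univ.inf' ⟨0, Finset.mem_univ 0⟩ s := hlt
        _ ≤ s i := Finset.inf'_le s (Finset.mem_univ i)
    have : 1 - α ≤ F q := hq
    rw [hF] at this
    simp only [hfil, Finset.sum_empty] at this
    linarith
  -- key fact: F qhat ≥ 1 - α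
  have hA : 1 - α ≤ F qhat := by
    by_cases hT : ∃ i, qhat < s i
    · set T : Finset (Fin (n + 1)) := Finset.univ.filter fun i => qhat < s i with hTdef
      have hTne : T.Nonempty := by
        obtain ⟨i, hi⟩ := hT
        exact ⟨i, by simp [hTdef, hi]⟩
      set ε : ℝ := T.inf' hTne fun i => s i - qhat with hεdef
      have hε : 0 < ε := by
        rw [hεdef]
        apply (Finset.lt_inf'_iff _).mpr
        intro i hi
        have : qhat < s i := (Finset.mem_filter.mp hi).2
        linarith
      have hlt : sInf S < qhat + ε := by
        rw [← hqhat]; linarith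
      obtain ⟨q, hqS, hq⟩ := (csInf_lt_iff hbdd hne).mp hlt
      have hle : qhat ≤ q := hqhat ▸ csInf_le hbdd hqS
      have hsub : (Finset.univ.filter fun i : Fin (n + 1) => s i ≤ q) ⊆
          Finset.univ.filter fun i : Fin (n + 1) => s i ≤ qhat := by
        intro i hi
        have hiq : s i ≤ q := (Finset.mem_filter.mp hi).2
        refine Finset.mem_filter.mpr ⟨Finset.mem_univ i, ?_⟩
        by_contra hgt
        push_neg at hgt
        have hiT : i ∈ T := by simp [hTdef, hgt]
        have : ε ≤ s i - qhat := Finset.inf'_le _ hiT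
        linarith
      have : F q ≤ F qhat :=
        Finset.sum_le_sum_of_subset_of_nonneg hsub (fun i _ _ => hw0 i)
      have hqF : 1 - α ≤ F q := hqS
      linarith
    · push_neg at hT
      have hfil : (Finset.univ.filter fun i : Fin (n + 1) => s i ≤ qhat) =
          Finset.univ := Finset.filter_true_of_mem fun i _ => hT i
      rw [hF]
      simp only [hfil, hw1]
      linarith
  -- the "bad" indices
  set B : Finset (Fin (n + 1)) := Finset.univ.filter fun i => ¬ s i ≤ qhat with hBdef
  have hBsum : ∑ i ∈ B, w i ≤ α := by
    have := Finset.sum_filter_add_sum_filter_not Finset.univ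
      (fun i : Fin (n + 1) => s i ≤ qhat) w
    rw [hw1] at this
    have hFq : 1 - α ≤ F qhat := hA
    rw [hF] at hFq
    rw [hBdef]
    linarith
  -- measure of union of bad level sets is at most α
  have hU : μ[|E] (⋃ i ∈ B, {ω | V ω (Fin.last n) = s i}) ≤ ENNReal.ofReal α := by
    calc μ[|E] (⋃ i ∈ B, {ω | V ω (Fin.last n) = s i})
        ≤ ∑ i ∈ B, μ[|E] {ω | V ω (Fin.last n) = s i} := measure_biUnion_finset_le _ _
      _ = ∑ i ∈ B, ENNReal.ofReal (w i) := Finset.sum_congr rfl fun i _ => hcond i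
      _ = ENNReal.ofReal (∑ i ∈ B, w i) :=
          (ENNReal.ofReal_sum_of_nonneg fun i _ => hw0 i).symm
      _ ≤ ENNReal.ofReal α := ENNReal.ofReal_le_ofReal hBsum
  -- E is covered by the good event and the bad union
  have hcover : E ⊆ {ω | V ω (Fin.last n) ≤ qhat} ∪ ⋃ i ∈ B, {ω | V ω (Fin.last n) = s i} := by
    intro ω hω
    rw [hE] at hω
    have hmem : V ω (Fin.last n) ∈ Multiset.map s Finset.univ.val := by
      rw [← hω]
      exact Multiset.mem_map_of_mem _ (Finset.mem_univ_val _)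
    obtain ⟨j, _, hj⟩ := Multiset.mem_map.mp hmem
    by_cases hjq : s j ≤ qhat
    · left
      show V ω (Fin.last n) ≤ qhat
      rw [hj] at hjq
      exact hjq
    · right
      have hjB : j ∈ B := Finset.mem_filter.mpr ⟨Finset.mem_univ j, hjq⟩
      exact Set.mem_biUnion hjB hj.symm
  -- conclude
  have hchain : (1 : ENNReal) ≤ μ[|E] {ω | V ω (Fin.last n) ≤ qhat} + ENNReal.ofReal α := by
    calc (1 : ENNReal) = μ[|E] E := hcE.symm
      _ ≤ μ[|E] ({ω | V ω (Fin.last n) ≤ qhat} ∪ ⋃ i ∈ B, {ω | V ω (Fin.last n) = s i}) :=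
          measure_mono hcover
      _ ≤ μ[|E] {ω | V ω (Fin.last n) ≤ qhat}
          + μ[|E] (⋃ i ∈ B, {ω | V ω (Fin.last n) = s i}) := measure_union_le _ _
      _ ≤ μ[|E] {ω | V ω (Fin.last n) ≤ qhat} + ENNReal.ofReal α := by
          exact add_le_add le_rfl hU
  have hsplit : ENNReal.ofReal (1 - α) + ENNReal.ofReal α = 1 := by
    rw [← ENNReal.ofReal_add (by linarith) (le_of_lt hα0)]
    norm_num
  have := hsplit ▸ hchain
  exact (ENNReal.add_le_add_iff_right ENNReal.ofReal_ne_top).mp this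
end

section
/- Let X be a finite set, D a distribution on X, and c, c* : X → Δ^K. Suppose D = Σ_k λ_k P_k is a mixture such that E_{x∼P_k}[c*(x)] = e_k (the k-th standard basis vector) for each k, and c is multiaccurate with respect to every distribution in the family {Σ_k μ_k P_k : μ ∈ Δ^K}. Then E_{x∼D}[c(x)] = λ. -/
/-- Multiaccuracy with respect to all mixture test environments, combined with the oracle
identity E_{P_k}[c*] = e_k, forces the mean classifier output under the mixture with weights
λ to equal λ. -/
theorem multiaccurate_mean_equals_mixture
    {E : Type*} [Fintype E] (K : ℕ) (hK : 1 ≤ K)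
    (P : Fin K → E → ℝ) (hP0 : ∀ k x, 0 ≤ P k x) (hP1 : ∀ k, ∑ x, P k x = 1)
    (lam : Fin K → ℝ) (hlam0 : ∀ k, 0 ≤ lam k) (hlam1 : ∑ k, lam k = 1)
    (c cstar : E → Fin K → ℝ)
    (horacle : ∀ k j, ∑ x, P k x * cstar x j = if j = k then 1 else 0)
    (hma : ∀ mu : Fin K → ℝ, (∀ k, 0 ≤ mu k) → ∑ k, mu k = 1 →
      ∀ j, ∑ x, (∑ k, mu k * P k x) * c x j = ∑ x, (∑ k, mu k * P k x) * cstar x j) :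
    ∀ j, ∑ x, (∑ k, lam k * P k x) * c x j = lam j := by
  intro j
  rw [hma lam hlam0 hlam1 j]
  calc ∑ x, (∑ k, lam k * P k x) * cstar x j
      = ∑ k, lam k * ∑ x, P k x * cstar x j := by
        simp only [Finset.sum_mul, Finset.mul_sum, mul_assoc]
        rw [Finset.sum_comm]
    _ = lam j := by simp [horacle]
end
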